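/- Let k be a field and m, n ≥ 1. The k-subalgebra of the polynomial ring k[t_1,…,t_{m+n+1}] generated by the monomials t_i t_j for 1 ≤ i ≤ m < j ≤ m+n together with t_k t_{m+n+1} for 1 ≤ k ≤ m+n (the edge ring k[K_{1,m,n}]) is isomorphic as a k-algebra to the k-subalgebra of k[x_1,…,x_m, y_1,…,y_n, t] generated by the monomials x_1⋯x_i · y_1⋯y_j · t for 0 ≤ i ≤ m, 0 ≤ j ≤ n with (i,j) ≠ (0,n) (the Hibi ring k[Π'_{m,n}]). -/

import Mathlib

open MvPolynomial AddMonoidAlgebra Finset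

lemma indsum' {β : Type*} (s : Finset β) (g : β → ℕ) (c : ℕ)
    (hg : ∀ x ∈ s, ∀ y ∈ s, g x = g y → x = y) :
    (∑ x ∈ s, if c = g x then (1:ℤ) else 0) = if ∃ x ∈ s, c = g x then 1 else 0 := by
  classical
  by_cases h : ∃ x ∈ s, c = g x
  · obtain ⟨x₀, hx₀, hc⟩ := h
    rw [if_pos ⟨x₀, hx₀, hc⟩, Finset.sum_eq_single_of_mem x₀ hx₀, if_pos hc]
    intro y hy hne
    rw [if_neg]
    intro he
    exact hne (hg _ hy _ hx₀ (he.symm.trans hc))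
  · rw [if_neg h]
    exact Finset.sum_eq_zero fun x hx => if_neg fun hc => h ⟨x, hx, hc⟩

lemma indk {d : ℕ} (F : Finset (Fin d)) (c : ℕ) (h : c < d) :
    (∑ k ∈ F, if c = (k:ℕ) then (1:ℤ) else 0) = if (⟨c, h⟩ : Fin d) ∈ F then 1 else 0 := by
  rw [indsum' _ _ _ (fun x _ y _ hxy => Fin.ext hxy)]
  congr 1
  apply propext
  constructor
  · rintro ⟨x, hx, hcx⟩
    exact (Fin.ext hcx : (⟨c,h⟩ : Fin d) = x) ▸ hx
  · intro hp
    exact ⟨⟨c,h⟩, hp, rfl⟩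

section
variable (m n : ℕ)

def Wf : (Fin m ⊕ Fin n ⊕ Unit) → (Fin (m+n+1) → ℤ)
  | Sum.inl a => fun k => (if (a:ℕ) = (k:ℕ) then 1 else 0)
      - (if (if (a:ℕ) = 0 then m+n else (a:ℕ)-1) = (k:ℕ) then 1 else 0)
  | Sum.inr (Sum.inl b) => fun k =>
      (if m+(b:ℕ)+1 = (k:ℕ) then 1 else 0) - (if m+(b:ℕ) = (k:ℕ) then 1 else 0)
  | Sum.inr (Sum.inr _) => fun k =>
      (if m = (k:ℕ) then 1 else 0) + (if m+n = (k:ℕ) then 1 else 0)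

def Af (u : (Fin m ⊕ Fin n ⊕ Unit) →₀ ℕ) : Fin (m+n+1) → ℤ :=
  u.sum fun v e => e • Wf m n v

lemma sum_Af (u : (Fin m ⊕ Fin n ⊕ Unit) →₀ ℕ) (F : Finset (Fin (m+n+1))) :
    ∑ k ∈ F, Af m n u k =
      ∑ v : Fin m ⊕ Fin n ⊕ Unit, (u v : ℤ) * (∑ k ∈ F, Wf m n v k) := by
  have h1 : Af m n u = ∑ v : Fin m ⊕ Fin n ⊕ Unit, (u v) • Wf m n v :=
    Finsupp.sum_fintype _ _ (fun v => zero_smul _ _)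
  simp_rw [h1, Finset.sum_apply, Pi.smul_apply, nsmul_eq_mul, Finset.mul_sum]
  rw [Finset.sum_comm]

lemma sumFx (u : (Fin m ⊕ Fin n ⊕ Unit) →₀ ℕ) (a' : Fin m) :
    ∑ k ∈ univ.filter (fun k : Fin (m+n+1) => (a':ℕ) ≤ (k:ℕ) ∧ (k:ℕ) < m), Af m n u k
      = u (Sum.inl a') := by
  rw [sum_Af]
  have hinner : ∀ v, (∑ k ∈ univ.filter
      (fun k : Fin (m+n+1) => (a':ℕ) ≤ (k:ℕ) ∧ (k:ℕ) < m), Wf m n v k)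
      = if v = Sum.inl a' then 1 else 0 := by
    have ha' := a'.isLt
    rintro (a | b | ⟨⟩) <;> simp only [Wf, Finset.sum_sub_distrib, Finset.sum_add_distrib]
    · have ha := a.isLt
      by_cases ha0 : (a:ℕ) = 0
      · simp only [ha0, ite_true]
        rw [indk _ 0 (by omega), indk _ (m+n) (by omega)]
        simp only [Finset.mem_filter, Finset.mem_univ, true_and, Sum.inl.injEq, Fin.ext_iff]
        split_ifs <;> omega
      · rw [if_neg ha0, indk _ _ (by omega : (a:ℕ) < m+n+1),
          indk _ _ (by omega : (a:ℕ)-1 < m+n+1)]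
        simp only [Finset.mem_filter, Finset.mem_univ, true_and, Sum.inl.injEq, Fin.ext_iff]
        split_ifs <;> omega
    · have hb := b.isLt
      rw [indk _ _ (by omega : m+(b:ℕ)+1 < m+n+1), indk _ _ (by omega : m+(b:ℕ) < m+n+1)]
      simp only [Finset.mem_filter, Finset.mem_univ, true_and, reduceCtorEq, ite_false]
      split_ifs <;> omega
    · rw [indk _ _ (by omega : m < m+n+1), indk _ _ (by omega : m+n < m+n+1)]
      simp only [Finset.mem_filter, Finset.mem_univ, true_and, reduceCtorEq, ite_false]
      split_ifs <;> omega
  simp_rw [hinner, mul_ite, mul_one, mul_zero]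
  rw [Finset.sum_ite_eq' Finset.univ (Sum.inl a') (fun v => ((u v : ℤ)))]
  simp

lemma sumFy (u : (Fin m ⊕ Fin n ⊕ Unit) →₀ ℕ) (b' : Fin n) :
    ∑ k ∈ univ.filter (fun k : Fin (m+n+1) => m ≤ (k:ℕ) ∧ (k:ℕ) ≤ m + (b':ℕ)), Af m n u k
      = (u (Sum.inr (Sum.inr ())) : ℤ) - u (Sum.inr (Sum.inl b')) := by
  rw [sum_Af]
  have hb' := b'.isLt
  have hinner : ∀ v, (∑ k ∈ univ.filter
      (fun k : Fin (m+n+1) => m ≤ (k:ℕ) ∧ (k:ℕ) ≤ m + (b':ℕ)), Wf m n v k)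
      = (if v = Sum.inr (Sum.inr ()) then 1 else 0)
        - (if v = Sum.inr (Sum.inl b') then 1 else 0) := by
    rintro (a | b | ⟨⟩) <;> simp only [Wf, Finset.sum_sub_distrib, Finset.sum_add_distrib]
    · have ha := a.isLt
      by_cases ha0 : (a:ℕ) = 0
      · simp only [ha0, ite_true]
        rw [indk _ 0 (by omega), indk _ (m+n) (by omega)]
        simp only [Finset.mem_filter, Finset.mem_univ, true_and, reduceCtorEq, ite_false]
        split_ifs <;> omega
      · rw [if_neg ha0, indk _ _ (by omega : (a:ℕ) < m+n+1),
          indk _ _ (by omega : (a:ℕ)-1 < m+n+1)]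
        simp only [Finset.mem_filter, Finset.mem_univ, true_and, reduceCtorEq, ite_false]
        split_ifs <;> omega
    · have hb := b.isLt
      rw [indk _ _ (by omega : m+(b:ℕ)+1 < m+n+1), indk _ _ (by omega : m+(b:ℕ) < m+n+1)]
      simp only [Finset.mem_filter, Finset.mem_univ, true_and, reduceCtorEq, ite_false,
        Sum.inr.injEq, Sum.inl.injEq, Fin.ext_iff]
      split_ifs <;> omega
    · rw [indk _ _ (by omega : m < m+n+1), indk _ _ (by omega : m+n < m+n+1)]
      simp only [Finset.mem_filter, Finset.mem_univ, true_and, Sum.inr.injEq, Sum.inl.injEq,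
        reduceCtorEq, ite_false, ite_true]
      split_ifs <;> omega
  simp_rw [hinner, mul_sub, mul_ite, mul_one, mul_zero, Finset.sum_sub_distrib]
  rw [Finset.sum_ite_eq' Finset.univ (Sum.inr (Sum.inr ())) (fun v => ((u v : ℤ))),
    Finset.sum_ite_eq' Finset.univ (Sum.inr (Sum.inl b')) (fun v => ((u v : ℤ)))]
  simp

lemma sumAll (u : (Fin m ⊕ Fin n ⊕ Unit) →₀ ℕ) :
    ∑ k : Fin (m+n+1), Af m n u k = 2 * (u (Sum.inr (Sum.inr ())) : ℤ) := by
  rw [show (Finset.univ : Finset (Fin (m+n+1))) = Finset.univ.filter (fun _ => True) by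
    simp, sum_Af]
  have hinner : ∀ v, (∑ k ∈ univ.filter (fun _ : Fin (m+n+1) => True), Wf m n v k)
      = if v = Sum.inr (Sum.inr ()) then 2 else 0 := by
    rintro (a | b | ⟨⟩) <;> simp only [Wf, Finset.sum_sub_distrib, Finset.sum_add_distrib]
    · have ha := a.isLt
      by_cases ha0 : (a:ℕ) = 0
      · simp only [ha0, ite_true]
        rw [indk _ 0 (by omega), indk _ (m+n) (by omega)]
        simp
      · rw [if_neg ha0, indk _ _ (by omega : (a:ℕ) < m+n+1),
          indk _ _ (by omega : (a:ℕ)-1 < m+n+1)]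
        simp
    · have hb := b.isLt
      rw [indk _ _ (by omega : m+(b:ℕ)+1 < m+n+1), indk _ _ (by omega : m+(b:ℕ) < m+n+1)]
      simp
    · rw [indk _ _ (by omega : m < m+n+1), indk _ _ (by omega : m+n < m+n+1)]
      simp
  simp_rw [hinner, mul_ite, mul_zero]
  rw [Finset.sum_ite_eq' Finset.univ (Sum.inr (Sum.inr ())) (fun v => ((u v : ℤ)) * 2)]
  simp [mul_comm]

lemma Af_inj : Function.Injective (Af m n) := by
  intro u u' h
  have ht : u (Sum.inr (Sum.inr ())) = u' (Sum.inr (Sum.inr ())) := by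
    have h1 := sumAll m n u
    have h2 := sumAll m n u'
    rw [h] at h1
    rw [h1] at h2
    omega
  ext v
  rcases v with a | b | ⟨⟩
  · have h1 := sumFx m n u a
    have h2 := sumFx m n u' a
    rw [h] at h1
    rw [h1] at h2
    omega
  · have h1 := sumFy m n u b
    have h2 := sumFy m n u' b
    rw [h] at h1
    rw [h1] at h2
    omega
  · exact ht

lemma indsum2 {β : Type*} (s : Finset β) (g : β → ℕ) (c : ℕ)
    (hg : ∀ x ∈ s, ∀ y ∈ s, g x = g y → x = y) :
    (∑ x ∈ s, if g x = c then (1:ℤ) else 0) = if ∃ x ∈ s, g x = c then 1 else 0 := by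
  classical
  by_cases h : ∃ x ∈ s, g x = c
  · obtain ⟨x₀, hx₀, hc⟩ := h
    rw [if_pos ⟨x₀, hx₀, hc⟩, Finset.sum_eq_single_of_mem x₀ hx₀, if_pos hc]
    intro y hy hne
    rw [if_neg]
    intro he
    exact hne (hg _ hy _ hx₀ (he.trans hc.symm))
  · rw [if_neg h]
    exact Finset.sum_eq_zero fun x hx => if_neg fun hc => h ⟨x, hx, hc⟩

lemma WXsum (i : ℕ) (hi : i ≤ m) (k : Fin (m+n+1)) :
    ∑ a ∈ univ.filter (fun a : Fin m => (a:ℕ) < i), Wf m n (Sum.inl a) k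
      = (if (k:ℕ)+1 = i then 1 else 0) - (if ((k:ℕ) = m+n ∧ 1 ≤ i) then 1 else 0) := by
  have hk := k.isLt
  simp only [Wf, Finset.sum_sub_distrib]
  rw [indsum2 _ (fun a : Fin m => (a:ℕ)) (k:ℕ) (fun x _ y _ hxy => Fin.ext hxy),
    indsum2 _ (fun a : Fin m => if (a:ℕ) = 0 then m+n else (a:ℕ)-1) (k:ℕ)
      (by
        intro x _ y _ hxy
        have hx := x.isLt
        have hy := y.isLt
        apply Fin.ext
        split_ifs at hxy <;> omega)]
  have e1 : (∃ a ∈ univ.filter (fun a : Fin m => (a:ℕ) < i), (a:ℕ) = (k:ℕ)) ↔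
      (k:ℕ) < i := by
    simp only [Finset.mem_filter, Finset.mem_univ, true_and]
    constructor
    · rintro ⟨a, ha, hak⟩; omega
    · intro h
      exact ⟨⟨(k:ℕ), by omega⟩, by simpa using h, rfl⟩
  have e2 : (∃ a ∈ univ.filter (fun a : Fin m => (a:ℕ) < i),
      (if (a:ℕ) = 0 then m+n else (a:ℕ)-1) = (k:ℕ)) ↔
      ((1 ≤ i ∧ (k:ℕ) = m+n) ∨ ((k:ℕ)+1 < i)) := by
    simp only [Finset.mem_filter, Finset.mem_univ, true_and]
    constructor
    · rintro ⟨a, ha, hak⟩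
      have hx := a.isLt
      split_ifs at hak <;> omega
    · rintro (⟨h1, h2⟩ | h)
      · exact ⟨⟨0, by omega⟩, by simp; omega, by simp [h2]⟩
      · refine ⟨⟨(k:ℕ)+1, by omega⟩, by simpa using h, ?_⟩
        simp
  simp only [e1, e2]
  split_ifs <;> omega

lemma WYsum (j : ℕ) (hj : j ≤ n) (k : Fin (m+n+1)) :
    ∑ b ∈ univ.filter (fun b : Fin n => (b:ℕ) < j), Wf m n (Sum.inr (Sum.inl b)) k
      = (if ((k:ℕ) = m+j ∧ 1 ≤ j) then 1 else 0)
        - (if ((k:ℕ) = m ∧ 1 ≤ j) then 1 else 0) := by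
  have hk := k.isLt
  simp only [Wf, Finset.sum_sub_distrib]
  rw [indsum2 _ (fun b : Fin n => m+(b:ℕ)+1) (k:ℕ)
      (by intro x _ y _ hxy; exact Fin.ext (by omega)),
    indsum2 _ (fun b : Fin n => m+(b:ℕ)) (k:ℕ)
      (by intro x _ y _ hxy; exact Fin.ext (by omega))]
  have e1 : (∃ b ∈ univ.filter (fun b : Fin n => (b:ℕ) < j), m+(b:ℕ)+1 = (k:ℕ)) ↔
      (m+1 ≤ (k:ℕ) ∧ (k:ℕ) ≤ m+j) := by
    simp only [Finset.mem_filter, Finset.mem_univ, true_and]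
    constructor
    · rintro ⟨b, hb, hbk⟩; omega
    · intro h
      exact ⟨⟨(k:ℕ)-m-1, by omega⟩, by simp; omega, by simp; omega⟩
  have e2 : (∃ b ∈ univ.filter (fun b : Fin n => (b:ℕ) < j), m+(b:ℕ) = (k:ℕ)) ↔
      (m ≤ (k:ℕ) ∧ (k:ℕ) < m+j) := by
    simp only [Finset.mem_filter, Finset.mem_univ, true_and]
    constructor
    · rintro ⟨b, hb, hbk⟩; omega
    · intro h
      exact ⟨⟨(k:ℕ)-m, by omega⟩, by simp; omega, by simp; omega⟩
  simp only [e1, e2]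
  split_ifs <;> omega

def Ef (c : Fin (m+n+1)) : Fin (m+n+1) → ℤ := fun k => if (c:ℕ) = (k:ℕ) then 1 else 0

def Bf (u : Fin (m+n+1) →₀ ℕ) : Fin (m+n+1) → ℤ :=
  u.sum fun c e => e • Ef m n c

lemma Bf_apply (u : Fin (m+n+1) →₀ ℕ) (k : Fin (m+n+1)) : Bf m n u k = u k := by
  have h1 : Bf m n u = ∑ c : Fin (m+n+1), (u c) • Ef m n c :=
    Finsupp.sum_fintype _ _ (fun v => zero_smul _ _)
  rw [h1, Finset.sum_apply]
  simp only [Pi.smul_apply, Ef, nsmul_eq_mul, mul_ite, mul_one, mul_zero]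
  have : ∀ c : Fin (m+n+1), ((c:ℕ) = (k:ℕ)) = (c = k) := fun c => by
    simp [Fin.ext_iff]
  simp_rw [this]
  rw [Finset.sum_ite_eq' Finset.univ k (fun c => ((u c : ℤ)))]
  simp

lemma Bf_inj : Function.Injective (Bf m n) := by
  intro u u' h
  ext k
  have h1 := Bf_apply m n u k
  have h2 := Bf_apply m n u' k
  rw [h] at h1
  rw [h1] at h2
  omega
end

section Generic
lemma prod_single1 {K G β : Type*} [Field K] [AddCommMonoid G] (s : Finset β) (h : β → G) :
    ∏ v ∈ s, AddMonoidAlgebra.single (h v) (1:K) =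
      AddMonoidAlgebra.single (∑ v ∈ s, h v) 1 := by
  classical
  induction s using Finset.induction_on with
  | empty => simp [AddMonoidAlgebra.one_def]
  | insert _ _ hx ih =>
      rw [Finset.prod_insert hx, ih, AddMonoidAlgebra.single_mul_single, Finset.sum_insert hx,
        one_mul]

lemma aeval_single_monomial {K σ G : Type*} [Field K] [AddCommMonoid G] (w : σ → G)
    (u : σ →₀ ℕ) (c : K) :
    aeval (fun v => AddMonoidAlgebra.single (w v) (1:K)) (monomial u c) =
      AddMonoidAlgebra.single (u.sum fun v e => e • w v) c := by
  classical
  rw [aeval_monomial]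
  have : (u.prod fun v e => (AddMonoidAlgebra.single (w v) (1:K)) ^ e) =
      AddMonoidAlgebra.single (u.sum fun v e => e • w v) 1 := by
    rw [Finsupp.prod, Finsupp.sum]
    simp_rw [AddMonoidAlgebra.single_pow, one_pow]
    exact prod_single1 _ _
  rw [this]
  rw [AddMonoidAlgebra.coe_algebraMap]
  simp only [Function.comp_apply, Algebra.algebraMap_self, RingHom.id_apply]
  rw [AddMonoidAlgebra.single_mul_single, zero_add, mul_one]

lemma aeval_single_injective {K σ G : Type*} [Field K] [AddCommMonoid G] [DecidableEq G]
    (w : σ → G)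
    (hA : Function.Injective fun u : σ →₀ ℕ => u.sum fun v e => e • w v) :
    Function.Injective (aeval (fun v => AddMonoidAlgebra.single (w v) (1:K)) :
      MvPolynomial σ K →ₐ[K] AddMonoidAlgebra K G) := by
  classical
  set A : (σ →₀ ℕ) → G := fun u => u.sum fun v e => e • w v with hAdef
  have key : ∀ (p : MvPolynomial σ K) (u : σ →₀ ℕ),
      (aeval (fun v => AddMonoidAlgebra.single (w v) (1:K)) p).coeff (A u) = coeff u p := by
    intro p u
    conv_lhs => rw [p.as_sum]
    rw [map_sum]
    simp_rw [aeval_single_monomial]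
    rw [AddMonoidAlgebra.coeff_sum]
    simp_rw [AddMonoidAlgebra.coeff_single]
    rw [Finsupp.finset_sum_apply]
    rw [Finset.sum_eq_single u]
    · rw [Finsupp.single_apply, if_pos rfl]
    · intro v hv hvu
      rw [Finsupp.single_apply, if_neg fun h => hvu (hA h)]
    · intro hu
      rw [Finsupp.single_apply, if_pos rfl, MvPolynomial.notMem_support_iff.mp hu]
  intro p q h
  ext u
  rw [← key p u, ← key q u, h]

end Generic

section Main
variable (K : Type*) [Field K] (m n : ℕ)

noncomputable def Phi : MvPolynomial (Fin m ⊕ Fin n ⊕ Unit) K →ₐ[K]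
    AddMonoidAlgebra K (Fin (m+n+1) → ℤ) :=
  aeval fun v => AddMonoidAlgebra.single (Wf m n v) 1

noncomputable def Iot : MvPolynomial (Fin (m+n+1)) K →ₐ[K]
    AddMonoidAlgebra K (Fin (m+n+1) → ℤ) :=
  aeval fun c => AddMonoidAlgebra.single (Ef m n c) 1

lemma Phi_inj : Function.Injective (Phi K m n) :=
  aeval_single_injective _ (Af_inj m n)

lemma Iot_inj : Function.Injective (Iot K m n) :=
  aeval_single_injective _ (Bf_inj m n)

lemma Phi_gen (i j : ℕ) :
    Phi K m n ((∏ a ∈ Finset.univ.filter (fun a : Fin m => (a:ℕ) < i), X (Sum.inl a)) *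
        (∏ b ∈ Finset.univ.filter (fun b : Fin n => (b:ℕ) < j), X (Sum.inr (Sum.inl b))) *
        X (Sum.inr (Sum.inr ()))) =
      AddMonoidAlgebra.single
        ((∑ a ∈ Finset.univ.filter (fun a : Fin m => (a:ℕ) < i), Wf m n (Sum.inl a)) +
         (∑ b ∈ Finset.univ.filter (fun b : Fin n => (b:ℕ) < j), Wf m n (Sum.inr (Sum.inl b))) +
         Wf m n (Sum.inr (Sum.inr ()))) 1 := by
  rw [map_mul, map_mul, map_prod, map_prod]
  simp only [Phi, aeval_X]
  rw [prod_single1, prod_single1, AddMonoidAlgebra.single_mul_single,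
    AddMonoidAlgebra.single_mul_single, mul_one, mul_one]

lemma Iot_gen (a b : Fin (m+n+1)) :
    Iot K m n (X a * X b) = AddMonoidAlgebra.single (Ef m n a + Ef m n b) 1 := by
  rw [map_mul]
  simp only [Iot, aeval_X]
  rw [AddMonoidAlgebra.single_mul_single, mul_one]

lemma expA (i j : ℕ) (hi1 : 1 ≤ i) (hi : i ≤ m) (hj : j ≤ n) (c1 c2 : Fin (m+n+1))
    (hc1 : (c1:ℕ) = i-1) (hc2 : (c2:ℕ) = m+j) :
    (∑ a ∈ Finset.univ.filter (fun a : Fin m => (a:ℕ) < i), Wf m n (Sum.inl a))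
      + (∑ b ∈ Finset.univ.filter (fun b : Fin n => (b:ℕ) < j), Wf m n (Sum.inr (Sum.inl b)))
      + Wf m n (Sum.inr (Sum.inr ())) = Ef m n c1 + Ef m n c2 := by
  funext k
  have hk := k.isLt
  simp only [Pi.add_apply, Finset.sum_apply]
  rw [WXsum m n i hi k, WYsum m n j hj k]
  simp only [Wf, Ef, hc1, hc2]
  split_ifs <;> first | exact (False.elim (by assumption)) | omega

lemma expB (j : ℕ) (hj : j < n) (c1 c2 : Fin (m+n+1))
    (hc1 : (c1:ℕ) = m+j) (hc2 : (c2:ℕ) = m+n) :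
    (∑ a ∈ Finset.univ.filter (fun a : Fin m => (a:ℕ) < 0), Wf m n (Sum.inl a))
      + (∑ b ∈ Finset.univ.filter (fun b : Fin n => (b:ℕ) < j), Wf m n (Sum.inr (Sum.inl b)))
      + Wf m n (Sum.inr (Sum.inr ())) = Ef m n c1 + Ef m n c2 := by
  funext k
  have hk := k.isLt
  simp only [Pi.add_apply, Finset.sum_apply]
  rw [WXsum m n 0 (by omega) k, WYsum m n j (by omega) k]
  simp only [Wf, Ef, hc1, hc2]
  split_ifs <;> first | exact (False.elim (by assumption)) | omega

end Main



open MvPolynomial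

/-- The edge ring `k[K_{1,m,n}]` (vertices 0-based: parts `{0,…,m-1}`, `{m,…,m+n-1}`,
`{m+n}`) is isomorphic as a `k`-algebra to the Hibi ring `k[Π'_{m,n}]`, the subalgebra
of `k[x_1,…,x_m,y_1,…,y_n,t]` generated by the monomials `x_1⋯x_i · y_1⋯y_j · t` with
`0 ≤ i ≤ m`, `0 ≤ j ≤ n`, `(i,j) ≠ (0,n)`. -/
theorem stmt_8 (K : Type*) [Field K] (m n : ℕ) (hm : 1 ≤ m) (hn : 1 ≤ n) :
    Nonempty (
      (Algebra.adjoin K {p : MvPolynomial (Fin (m + n + 1)) K |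
        (∃ a b : Fin (m + n + 1), (a : ℕ) < m ∧ m ≤ (b : ℕ) ∧ (b : ℕ) < m + n ∧
          p = X a * X b) ∨
        (∃ c : Fin (m + n + 1), (c : ℕ) < m + n ∧
          p = X c * X (⟨m + n, by omega⟩ : Fin (m + n + 1)))}) ≃ₐ[K]
      (Algebra.adjoin K {q : MvPolynomial (Fin m ⊕ Fin n ⊕ Unit) K |
        ∃ i j : ℕ, i ≤ m ∧ j ≤ n ∧ ¬(i = 0 ∧ j = n) ∧
          q = (∏ a ∈ Finset.univ.filter (fun a : Fin m => (a : ℕ) < i),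
                X (Sum.inl a)) *
              (∏ b ∈ Finset.univ.filter (fun b : Fin n => (b : ℕ) < j),
                X (Sum.inr (Sum.inl b))) *
              X (Sum.inr (Sum.inr ()))})) := by
  constructor
  set SE : Set (MvPolynomial (Fin (m + n + 1)) K) := {p |
    (∃ a b : Fin (m + n + 1), (a : ℕ) < m ∧ m ≤ (b : ℕ) ∧ (b : ℕ) < m + n ∧
      p = X a * X b) ∨
    (∃ c : Fin (m + n + 1), (c : ℕ) < m + n ∧
      p = X c * X (⟨m + n, by omega⟩ : Fin (m + n + 1)))} with hSE
  set SH : Set (MvPolynomial (Fin m ⊕ Fin n ⊕ Unit) K) := {q |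
    ∃ i j : ℕ, i ≤ m ∧ j ≤ n ∧ ¬(i = 0 ∧ j = n) ∧
      q = (∏ a ∈ Finset.univ.filter (fun a : Fin m => (a : ℕ) < i), X (Sum.inl a)) *
          (∏ b ∈ Finset.univ.filter (fun b : Fin n => (b : ℕ) < j),
            X (Sum.inr (Sum.inl b))) *
          X (Sum.inr (Sum.inr ()))} with hSH
  have himg : (Iot K m n) '' SE = (Phi K m n) '' SH := by
    ext z
    simp only [Set.mem_image, hSE, hSH, Set.mem_setOf_eq]
    constructor
    · rintro ⟨p, (⟨a, b, h1, h2, h3, rfl⟩ | ⟨c, hc, rfl⟩), rfl⟩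
      · refine ⟨_, ⟨(a:ℕ)+1, (b:ℕ)-m, by omega, by omega, by omega, rfl⟩, ?_⟩
        rw [Phi_gen, Iot_gen]
        congr 1
        exact expA m n ((a:ℕ)+1) ((b:ℕ)-m) (by omega) (by omega) (by omega)
          a b (by omega) (by omega)
      · by_cases hcm : (c:ℕ) < m
        · refine ⟨_, ⟨(c:ℕ)+1, n, by omega, by omega, by omega, rfl⟩, ?_⟩
          rw [Phi_gen, Iot_gen]
          congr 1
          exact expA m n ((c:ℕ)+1) n (by omega) (by omega) (by omega)
            c ⟨m+n, by omega⟩ (by omega) (by simp)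
        · refine ⟨_, ⟨0, (c:ℕ)-m, by omega, by omega, by omega, rfl⟩, ?_⟩
          rw [Phi_gen, Iot_gen]
          congr 1
          exact expB m n ((c:ℕ)-m) (by omega) c ⟨m+n, by omega⟩ (by omega) (by simp)
    · rintro ⟨q, ⟨i, j, hi, hj, hne, rfl⟩, rfl⟩
      by_cases hi0 : i = 0
      · have hjn : j < n := by
          rcases Nat.lt_or_ge j n with h | h
          · exact h
          · exact absurd ⟨hi0, by omega⟩ hne
        subst hi0
        refine ⟨X (⟨m+j, by omega⟩ : Fin (m+n+1)) * X (⟨m+n, by omega⟩ : Fin (m+n+1)),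
          Or.inr ⟨⟨m+j, by omega⟩, by simp; omega, rfl⟩, ?_⟩
        rw [Phi_gen, Iot_gen]
        congr 1
        exact (expB m n j hjn ⟨m+j, by omega⟩ ⟨m+n, by omega⟩ (by simp) (by simp)).symm
      · by_cases hjn : j = n
        · refine ⟨X (⟨i-1, by omega⟩ : Fin (m+n+1)) * X (⟨m+n, by omega⟩ : Fin (m+n+1)),
            Or.inr ⟨⟨i-1, by omega⟩, by simp; omega, rfl⟩, ?_⟩
          rw [Phi_gen, Iot_gen]
          congr 1
          exact (expA m n i j (by omega) hi hj
            ⟨i-1, by omega⟩ ⟨m+n, by omega⟩ (by simp) (by simp; omega)).symm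
        · refine ⟨X (⟨i-1, by omega⟩ : Fin (m+n+1)) * X (⟨m+j, by omega⟩ : Fin (m+n+1)),
            Or.inl ⟨⟨i-1, by omega⟩, ⟨m+j, by omega⟩, by simp; omega, by simp, by simp; omega,
              rfl⟩, ?_⟩
          rw [Phi_gen, Iot_gen]
          congr 1
          exact (expA m n i j (by omega) hi hj
            ⟨i-1, by omega⟩ ⟨m+j, by omega⟩ (by simp) (by simp)).symm
  have key : (Algebra.adjoin K SE).map (Iot K m n) = (Algebra.adjoin K SH).map (Phi K m n) := by
    rw [AlgHom.map_adjoin, AlgHom.map_adjoin, himg]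
  exact (Subalgebra.equivMapOfInjective _ (Iot K m n) (Iot_inj K m n)).trans
    ((Subalgebra.equivOfEq _ _ key).trans
      (Subalgebra.equivMapOfInjective _ (Phi K m n) (Phi_inj K m n)).symm)
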